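/- Let d ≥ 0 and l ∈ ℝ^m satisfy f(d,l) > 0, and let d̃ ≥ 0, l̃ ∈ ℝ^m satisfy f(d̃,l̃) > 0, with both ADAᵀ and AD̃Aᵀ positive definite. Let 1 ≤ j ≤ m and suppose (1/f(d̃,l̃)) d̃ = α ( (1/f(d,l)) d + (2/(m−1)) (1/γ_j(d,l)²) e_j ) for a scalar α ≥ (m²−1)/m². If γ_j(d,l) ≥ τ(A,u), then ψ(d̃,l̃) ≤ exp(−1/(2(m+1))) · ψ(d,l). -/

import Mathlib

open Matrix

/-- `f(d,l) := rᵀDAᵀBADr - rᵀDr + vᵀDv` with `D = Diag d`, `r = (u+l)/2`, `v = (u-l)/2`,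
`B = (ADAᵀ)⁻¹`. -/
noncomputable def fval {n m : ℕ} (A : Matrix (Fin n) (Fin m) ℝ) (u d l : Fin m → ℝ) : ℝ :=
  let D := Matrix.diagonal d
  let r := (u + l) / 2
  let v := (u - l) / 2
  let B := (A * D * Aᵀ)⁻¹
  r ⬝ᵥ (D *ᵥ (Aᵀ *ᵥ (B *ᵥ (A *ᵥ (D *ᵥ r))))) - r ⬝ᵥ (D *ᵥ r) + v ⬝ᵥ (D *ᵥ v)

/-- `γ_i(d,l) := sqrt(f(d,l) · a_iᵀ B a_i)`, the semi-width of `E(d,l)` in direction `a_i`. -/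
noncomputable def gamma {n m : ℕ} (A : Matrix (Fin n) (Fin m) ℝ) (u d l : Fin m → ℝ)
    (i : Fin m) : ℝ :=
  Real.sqrt (fval A u d l *
    ((fun k => A k i) ⬝ᵥ ((A * Matrix.diagonal d * Aᵀ)⁻¹ *ᵥ (fun k => A k i))))

/-- `τ(A,u) := |z(A,u)|` where `z(A,u) := inf_y max_i (a_iᵀy - u_i)`. -/
noncomputable def tau {n m : ℕ} (A : Matrix (Fin n) (Fin m) ℝ) (u : Fin m → ℝ) : ℝ :=
  |⨅ y : Fin n → ℝ, ⨆ i : Fin m, ((fun k => A k i) ⬝ᵥ y - u i)|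

/-- The potential `ψ(d,l) := ∏_i max{γ_i(d,l), (m/(m+1)) τ(A,u)}`. -/
noncomputable def psi {n m : ℕ} (A : Matrix (Fin n) (Fin m) ℝ) (u d l : Fin m → ℝ) : ℝ :=
  ∏ i : Fin m, max (gamma A u d l i) ((m / ((m : ℝ) + 1)) * tau A u)

section Helpers

variable {n m : ℕ}


lemma hlp_mul_vecMulVec (M : Matrix (Fin n) (Fin n) ℝ) (x y : Fin n → ℝ) :
    M * vecMulVec x y = vecMulVec (M *ᵥ x) y := by
  ext i k
  simp [mul_apply, vecMulVec_apply, mulVec, dotProduct, Finset.sum_mul, mul_assoc]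

lemma hlp_vecMulVec_mul (M : Matrix (Fin n) (Fin n) ℝ) (x y : Fin n → ℝ) :
    vecMulVec x y * M = vecMulVec x (Mᵀ *ᵥ y) := by
  ext i k
  simp [mul_apply, vecMulVec_apply, mulVec, dotProduct, Finset.mul_sum, transpose_apply,
    mul_comm, mul_left_comm]

lemma hlp_vecMulVec_mul_vecMulVec (x y z w : Fin n → ℝ) :
    vecMulVec x y * vecMulVec z w = (y ⬝ᵥ z) • vecMulVec x w := by
  ext i k
  simp [mul_apply, vecMulVec_apply, dotProduct, Finset.mul_sum, Finset.sum_mul]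
  ring_nf
  congr 1
  ext l
  ring

lemma hlp_vecMulVec_mulVec (x y v : Fin n → ℝ) :
    vecMulVec x y *ᵥ v = (y ⬝ᵥ v) • x := by
  ext i
  simp [vecMulVec_apply, mulVec, dotProduct, Finset.sum_mul, Finset.mul_sum, mul_comm,
    mul_left_comm]

lemma hlp_rank_one (A : Matrix (Fin n) (Fin m) ℝ) (j : Fin m) :
    A * Matrix.diagonal (Pi.single j 1 : Fin m → ℝ) * Aᵀ
      = vecMulVec (fun k => A k j) (fun k => A k j) := by
  ext k l
  rw [Matrix.mul_assoc]
  simp [mul_apply, Matrix.diagonal_apply, Pi.single_apply, transpose_apply, vecMulVec_apply,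
    ite_mul, mul_ite, Finset.sum_ite_eq, Finset.sum_ite_eq', mul_comm]

lemma hlp_quad_nonneg {Q : Matrix (Fin n) (Fin n) ℝ} (hQ : Q.PosSemidef) (x : Fin n → ℝ) :
    0 ≤ x ⬝ᵥ Q *ᵥ x := by simpa using hQ.dotProduct_mulVec_nonneg x

lemma hlp_inv_transpose {P : Matrix (Fin n) (Fin n) ℝ} (hP : P.PosDef) : P⁻¹ᵀ = P⁻¹ := by
  have h := hP.isHermitian.inv.eq
  rwa [Matrix.conjTranspose_eq_transpose_of_trivial] at h

lemma hlp_sm (P : Matrix (Fin n) (Fin n) ℝ) (hP : P.PosDef) (a : Fin n → ℝ) (f c s : ℝ)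
    (hf : f ≠ 0) (hs : s * (1 + c * f * (a ⬝ᵥ P⁻¹ *ᵥ a)) = c * f ^ 2) :
    ((1/f) • P + c • vecMulVec a a) *
      (f • P⁻¹ - s • vecMulVec (P⁻¹ *ᵥ a) (P⁻¹ *ᵥ a)) = 1 := by
  have hdet : IsUnit P.det := isUnit_iff_ne_zero.mpr hP.det_pos.ne'
  have hPB : P * P⁻¹ = 1 := Matrix.mul_nonsing_inv P hdet
  have h1 : P * vecMulVec (P⁻¹ *ᵥ a) (P⁻¹ *ᵥ a) = vecMulVec a (P⁻¹ *ᵥ a) := by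
    rw [hlp_mul_vecMulVec, Matrix.mulVec_mulVec, hPB, Matrix.one_mulVec]
  have h2 : vecMulVec a a * P⁻¹ = vecMulVec a (P⁻¹ *ᵥ a) := by
    rw [hlp_vecMulVec_mul, hlp_inv_transpose hP]
  have h3 : vecMulVec a a * vecMulVec (P⁻¹ *ᵥ a) (P⁻¹ *ᵥ a)
      = (a ⬝ᵥ P⁻¹ *ᵥ a) • vecMulVec a (P⁻¹ *ᵥ a) := hlp_vecMulVec_mul_vecMulVec _ _ _ _
  simp only [Matrix.add_mul, Matrix.mul_sub, Matrix.smul_mul, Matrix.mul_smul, hPB, h1, h2, h3]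
  set W := vecMulVec a (P⁻¹ *ᵥ a)
  set g := a ⬝ᵥ P⁻¹ *ᵥ a
  match_scalars
  · field_simp
  · field_simp
    nlinarith [hs]



lemma gamma_sq {n m : ℕ} (A : Matrix (Fin n) (Fin m) ℝ) (u d l : Fin m → ℝ)
    (hpd : (A * Matrix.diagonal d * Aᵀ).PosDef) (hf : 0 < fval A u d l) (i : Fin m) :
    gamma A u d l i ^ 2 = fval A u d l *
      ((fun k => A k i) ⬝ᵥ ((A * Matrix.diagonal d * Aᵀ)⁻¹ *ᵥ (fun k => A k i))) :=
  Real.sq_sqrt (mul_nonneg hf.le (hlp_quad_nonneg hpd.inv.posSemidef _))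

lemma gamma_nonneg {n m : ℕ} (A : Matrix (Fin n) (Fin m) ℝ) (u d l : Fin m → ℝ) (i : Fin m) :
    0 ≤ gamma A u d l i := Real.sqrt_nonneg _

end Helpers

set_option maxHeartbeats 4000000 in
/-- Lemma 4.1 of the paper. Under the stated update relation with
`α ≥ (m²-1)/m²`, if `γ_j(d,l) ≥ τ(A,u)` then the potential `ψ` decreases by the factor
`exp(-1/(2(m+1)))`. -/
theorem stmt_11 {n m : ℕ} (hm : 2 ≤ m) (A : Matrix (Fin n) (Fin m) ℝ) (u : Fin m → ℝ)
    (d l dt lt : Fin m → ℝ) (j : Fin m) (α : ℝ)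
    (hd : 0 ≤ d) (hdt : 0 ≤ dt)
    (hpd : (A * Matrix.diagonal d * Aᵀ).PosDef)
    (hpdt : (A * Matrix.diagonal dt * Aᵀ).PosDef)
    (hf : 0 < fval A u d l) (hft : 0 < fval A u dt lt)
    (hα : ((m : ℝ) ^ 2 - 1) / (m : ℝ) ^ 2 ≤ α)
    (hrel : (1 / fval A u dt lt) • dt =
      α • ((1 / fval A u d l) • d +
        (2 / ((m : ℝ) - 1) * (1 / gamma A u d l j ^ 2)) • (Pi.single j 1 : Fin m → ℝ)))
    (hγτ : tau A u ≤ gamma A u d l j) :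
    psi A u dt lt ≤ Real.exp (-1 / (2 * ((m : ℝ) + 1))) * psi A u d l := by
  have hm2 : (2:ℝ) ≤ (m:ℝ) := by exact_mod_cast hm
  have hm1 : (0:ℝ) < (m:ℝ) - 1 := by linarith
  have hm1' : (0:ℝ) < (m:ℝ) + 1 := by linarith
  have hm0 : (0:ℝ) < (m:ℝ) := by linarith
  have hmsq : (0:ℝ) < (m:ℝ)^2 - 1 := by nlinarith
  have hαpos : 0 < α := lt_of_lt_of_le (by positivity) hα
  have htau0 : 0 ≤ tau A u := abs_nonneg _
  have ht0 : 0 ≤ (m / ((m : ℝ) + 1)) * tau A u := by positivity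
  have hψ0 : 0 ≤ psi A u d l :=
    Finset.prod_nonneg fun i _ => le_trans (gamma_nonneg A u d l i) (le_max_left _ _)
  have hψt_factor0 : ∀ i : Fin m, 0 ≤ max (gamma A u dt lt i) ((m / ((m : ℝ) + 1)) * tau A u) :=
    fun i => le_trans (gamma_nonneg A u dt lt i) (le_max_left _ _)
  set f := fval A u d l with hfdef
  set ft := fval A u dt lt with hftdef
  set a : Fin n → ℝ := (fun k => A k j) with hadef
  set P := A * Matrix.diagonal d * Aᵀ with hPdef
  set g := a ⬝ᵥ P⁻¹ *ᵥ a with hgdef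
  have hg0 : 0 ≤ g := hlp_quad_nonneg hpd.inv.posSemidef a
  by_cases hgz : g = 0
  · -- degenerate case : a = 0, tau = 0, psi dt lt = 0
    have ha : a = 0 := by
      by_contra h
      have := hpd.inv.dotProduct_mulVec_pos (x := a) (by simpa using h)
      rw [show star a = a from by simp] at this
      exact this.ne' (by simpa [hgdef] using hgz)
    have hγj : gamma A u d l j = 0 := by
      rw [gamma, show (fun k => A k j) = a from rfl, ha]
      simp
    have hτ : tau A u = 0 := le_antisymm (hγj ▸ hγτ) htau0
    have hγjt : gamma A u dt lt j = 0 := by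
      rw [gamma, show (fun k => A k j) = a from rfl, ha]
      simp
    have : psi A u dt lt = 0 := by
      apply Finset.prod_eq_zero (Finset.mem_univ j)
      simp [hγjt, hτ]
    rw [this]
    positivity
  have hgpos : 0 < g := lt_of_le_of_ne hg0 (Ne.symm hgz)
  have hγj2 : gamma A u d l j ^ 2 = f * g := gamma_sq A u d l hpd hf j
  have hγjpos : 0 < gamma A u d l j ^ 2 := by rw [hγj2]; positivity
  -- abbreviations
  set c : ℝ := 2 / ((m : ℝ) - 1) * (1 / gamma A u d l j ^ 2) with hcdef
  have hcpos : 0 < c := by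
    rw [hcdef]; positivity
  have hcfg : c * (f * g) = 2 / ((m:ℝ) - 1) := by
    rw [hcdef, ← hγj2]
    have hγne : gamma A u d l j ≠ 0 := fun h => by simp [h] at hγjpos
    field_simp
  set s : ℝ := c * f^2 / (1 + c * f * g) with hsdef
  have hden : 1 + c * f * g = ((m:ℝ)+1)/((m:ℝ)-1) := by
    rw [mul_assoc, hcfg]; field_simp; ring
  have hdenpos : 0 < 1 + c * f * g := by rw [hden]; positivity
  have hspos : 0 < s := by rw [hsdef]; positivity
  -- dt in terms of d
  have hdt_eq : dt = (ft * α * (1/f)) • d + (ft * α * c) • (Pi.single j 1 : Fin m → ℝ) := by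
    have h1 : ft • ((1 / ft) • dt) = ft • (α • ((1/f) • d + c • (Pi.single j 1 : Fin m → ℝ))) := by
      rw [hrel]
    rw [smul_smul, mul_one_div, div_self hft.ne', one_smul] at h1
    rw [h1]
    funext i
    simp [smul_eq_mul]
    ring
  -- the new matrix
  have hPt : A * Matrix.diagonal dt * Aᵀ = (ft * α) • ((1/f) • P + c • vecMulVec a a) := by
    rw [hdt_eq]
    have hdg : Matrix.diagonal ((ft * α * (1/f)) • d + (ft * α * c) • (Pi.single j 1 : Fin m → ℝ))
        = (ft * α * (1/f)) • Matrix.diagonal d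
          + (ft * α * c) • Matrix.diagonal (Pi.single j 1 : Fin m → ℝ) := by
      ext i k
      by_cases h : i = k <;> simp [Matrix.diagonal_apply, h]
    rw [hdg]
    simp only [Matrix.mul_add, Matrix.add_mul, Matrix.mul_smul, Matrix.smul_mul, hlp_rank_one]
    rw [hadef, hPdef]
    module
  -- inverse of the new matrix
  have hQR : ((1/f) • P + c • vecMulVec a a) *
      (f • P⁻¹ - s • vecMulVec (P⁻¹ *ᵥ a) (P⁻¹ *ᵥ a)) = 1 := by
    apply hlp_sm P hpd a f c s hf.ne'
    rw [← hgdef, hsdef]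
    field_simp
  have hPtinv : (A * Matrix.diagonal dt * Aᵀ)⁻¹ =
      (1/(ft * α)) • (f • P⁻¹ - s • vecMulVec (P⁻¹ *ᵥ a) (P⁻¹ *ᵥ a)) := by
    apply Matrix.inv_eq_right_inv
    rw [hPt, Matrix.smul_mul, Matrix.mul_smul, smul_smul,
      mul_one_div, div_self (by positivity : ft * α ≠ 0), one_smul]
    exact hQR
  -- gamma-tilde squared
  have hγt2 : ∀ i : Fin m, gamma A u dt lt i ^ 2 =
      (1/α) * (f * ((fun k => A k i) ⬝ᵥ P⁻¹ *ᵥ (fun k => A k i))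
        - s * ((fun k => A k i) ⬝ᵥ P⁻¹ *ᵥ a)^2) := by
    intro i
    rw [gamma_sq A u dt lt hpdt hft i, hPtinv]
    rw [Matrix.smul_mulVec, Matrix.sub_mulVec, Matrix.smul_mulVec,
      Matrix.smul_mulVec, hlp_vecMulVec_mulVec]
    simp only [dotProduct_smul, dotProduct_sub, smul_eq_mul]
    rw [dotProduct_comm (P⁻¹ *ᵥ a) (fun k => A k i)]
    field_simp
    ring
  -- nonnegativity of the bracket
  have hb0 : ∀ i : Fin m, 0 ≤ (fun k => A k i) ⬝ᵥ P⁻¹ *ᵥ (fun k => A k i) :=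
    fun i => hlp_quad_nonneg hpd.inv.posSemidef _
  have hX0 : ∀ i : Fin m, 0 ≤ f * ((fun k => A k i) ⬝ᵥ P⁻¹ *ᵥ (fun k => A k i))
      - s * ((fun k => A k i) ⬝ᵥ P⁻¹ *ᵥ a)^2 := by
    intro i
    have h2 : 0 ≤ gamma A u dt lt i ^ 2 := sq_nonneg _
    rw [hγt2 i] at h2
    have h3 := mul_nonneg hαpos.le h2
    rw [← mul_assoc, mul_one_div, div_self hαpos.ne', one_mul] at h3
    exact h3
  -- kappa
  set κ : ℝ := (m:ℝ) / Real.sqrt ((m:ℝ)^2 - 1) with hκdef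
  have hsqp : 0 < Real.sqrt ((m:ℝ)^2-1) := Real.sqrt_pos.mpr hmsq
  have hκpos : 0 < κ := by rw [hκdef]; positivity
  have hκsq : κ^2 = (m:ℝ)^2/((m:ℝ)^2-1) := by rw [hκdef, div_pow, Real.sq_sqrt hmsq.le]
  have hκ1 : 1 ≤ κ := by
    have h1 : 1 ≤ κ^2 := by
      rw [hκsq, le_div_iff₀ hmsq]; linarith
    refine le_of_pow_le_pow_left₀ two_ne_zero hκpos.le ?_
    rw [one_pow]; exact h1
  have h1α : 1/α ≤ (m:ℝ)^2/((m:ℝ)^2-1) := by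
    rw [div_le_iff₀ (by positivity : (0:ℝ) < (m:ℝ)^2)] at hα
    rw [div_le_div_iff₀ hαpos hmsq]
    nlinarith
  -- bound for all i
  have hbound : ∀ i : Fin m, gamma A u dt lt i ≤ κ * gamma A u d l i := by
    intro i
    refine le_of_pow_le_pow_left₀ two_ne_zero
      (mul_nonneg hκpos.le (gamma_nonneg A u d l i)) ?_
    rw [hγt2 i, mul_pow, hκsq, gamma_sq A u d l hpd hf i]
    calc (1/α) * (f * ((fun k => A k i) ⬝ᵥ P⁻¹ *ᵥ (fun k => A k i))
            - s * ((fun k => A k i) ⬝ᵥ P⁻¹ *ᵥ a)^2)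
        ≤ ((m:ℝ)^2/((m:ℝ)^2-1)) * (f * ((fun k => A k i) ⬝ᵥ P⁻¹ *ᵥ (fun k => A k i))
            - s * ((fun k => A k i) ⬝ᵥ P⁻¹ *ᵥ a)^2) :=
          mul_le_mul_of_nonneg_right h1α (hX0 i)
      _ ≤ ((m:ℝ)^2/((m:ℝ)^2-1)) * (f * ((fun k => A k i) ⬝ᵥ P⁻¹ *ᵥ (fun k => A k i))) := by
          apply mul_le_mul_of_nonneg_left _ (by positivity)
          nlinarith [hspos, sq_nonneg ((fun k => A k i) ⬝ᵥ P⁻¹ *ᵥ a)]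
  -- sharper bound at j
  have hwj : (fun k => A k j) ⬝ᵥ P⁻¹ *ᵥ a = g := rfl
  have hbj : (fun k => A k j) ⬝ᵥ P⁻¹ *ᵥ (fun k => A k j) = g := rfl
  have hs5 : s = c * f^2 * (((m:ℝ)-1)/((m:ℝ)+1)) := by
    rw [hsdef, hden]
    field_simp
  have hsg : s * g^2 = 2 * (f*g) / ((m:ℝ)+1) := by
    calc s * g^2 = (c * (f*g)) * ((f*g) * (((m:ℝ)-1)/((m:ℝ)+1))) := by rw [hs5]; ring
      _ = (2/((m:ℝ)-1)) * ((f*g) * (((m:ℝ)-1)/((m:ℝ)+1))) := by rw [hcfg]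
      _ = 2 * (f*g) / ((m:ℝ)+1) := by field_simp
  have hboundj : gamma A u dt lt j ≤ ((m:ℝ)/((m:ℝ)+1)) * gamma A u d l j := by
    refine le_of_pow_le_pow_left₀ two_ne_zero
      (mul_nonneg (by positivity) (gamma_nonneg A u d l j)) ?_
    rw [hγt2 j, mul_pow, gamma_sq A u d l hpd hf j, ← hfdef, hwj, hsg]
    have hXj : f * g - 2 * (f*g)/((m:ℝ)+1) = (f*g) * (((m:ℝ)-1)/((m:ℝ)+1)) := by
      field_simp
      ring
    rw [hXj]
    have hfg0 : 0 ≤ (f*g) * (((m:ℝ)-1)/((m:ℝ)+1)) :=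
      mul_nonneg (mul_nonneg hf.le hg0) (by positivity)
    calc (1/α) * ((f*g) * (((m:ℝ)-1)/((m:ℝ)+1)))
        ≤ ((m:ℝ)^2/((m:ℝ)^2-1)) * ((f*g) * (((m:ℝ)-1)/((m:ℝ)+1))) :=
          mul_le_mul_of_nonneg_right h1α hfg0
      _ = ((m:ℝ)/((m:ℝ)+1))^2 * (f * g) := by
          field_simp [hm1.ne', hm1'.ne', hmsq.ne']
          ring
  -- factorwise bound of psi
  set t : ℝ := (m / ((m : ℝ) + 1)) * tau A u with htdef
  have hfac : ∀ i : Fin m, max (gamma A u dt lt i) t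
      ≤ (if i = j then (m:ℝ)/((m:ℝ)+1) else κ) * max (gamma A u d l i) t := by
    intro i
    by_cases hij : i = j
    · subst hij
      rw [if_pos rfl]
      apply max_le
      · exact hboundj.trans (mul_le_mul_of_nonneg_left (le_max_left _ _) (by positivity))
      · calc t = ((m:ℝ)/((m:ℝ)+1)) * tau A u := htdef
          _ ≤ ((m:ℝ)/((m:ℝ)+1)) * gamma A u d l i := by
              apply mul_le_mul_of_nonneg_left hγτ (by positivity)
          _ ≤ ((m:ℝ)/((m:ℝ)+1)) * max (gamma A u d l i) t :=
              mul_le_mul_of_nonneg_left (le_max_left _ _) (by positivity)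
    · rw [if_neg hij]
      apply max_le
      · exact (hbound i).trans (mul_le_mul_of_nonneg_left (le_max_left _ _) hκpos.le)
      · calc t ≤ κ * t := le_mul_of_one_le_left ht0 hκ1
          _ ≤ κ * max (gamma A u d l i) t :=
              mul_le_mul_of_nonneg_left (le_max_right _ _) hκpos.le
  -- product bound
  have hprod : psi A u dt lt ≤
      (∏ i : Fin m, (if i = j then (m:ℝ)/((m:ℝ)+1) else κ)) * psi A u d l := by
    rw [psi, psi, ← Finset.prod_mul_distrib]
    exact Finset.prod_le_prod (fun i _ => hψt_factor0 i) (fun i _ => hfac i)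
  have hprodc : (∏ i : Fin m, (if i = j then (m:ℝ)/((m:ℝ)+1) else κ))
      = ((m:ℝ)/((m:ℝ)+1)) * κ ^ (m - 1) := by
    rw [← Finset.mul_prod_erase Finset.univ _ (Finset.mem_univ j), if_pos rfl]
    congr 1
    rw [Finset.prod_congr rfl (fun i hi => if_neg (Finset.ne_of_mem_erase hi)),
      Finset.prod_const, Finset.card_erase_of_mem (Finset.mem_univ j), Finset.card_univ,
      Fintype.card_fin]
  -- numeric inequality
  have hκpow : κ ^ (m-1) ≤ Real.exp (1/(2*((m:ℝ)+1))) := by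
    refine le_of_pow_le_pow_left₀ two_ne_zero (Real.exp_pos _).le ?_
    have h6 : (κ^(m-1))^2 = ((m:ℝ)^2/((m:ℝ)^2-1))^(m-1) := by
      rw [← pow_mul, mul_comm (m-1) 2, pow_mul, hκsq]
    have h7 : ((m:ℝ)^2/((m:ℝ)^2-1)) ≤ Real.exp (1/((m:ℝ)^2-1)) := by
      have h8 := Real.add_one_le_exp (1/((m:ℝ)^2-1))
      have h9 : (m:ℝ)^2/((m:ℝ)^2-1) = 1/((m:ℝ)^2-1) + 1 := by field_simp; ring
      linarith
    have h10 : ((m:ℝ)^2/((m:ℝ)^2-1))^(m-1) ≤ (Real.exp (1/((m:ℝ)^2-1)))^(m-1) :=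
      pow_le_pow_left₀ (by positivity) h7 _
    have h11 : (Real.exp (1/((m:ℝ)^2-1)))^(m-1)
        = Real.exp (((m-1:ℕ):ℝ) * (1/((m:ℝ)^2-1))) := (Real.exp_nat_mul _ _).symm
    have h12 : ((m-1:ℕ):ℝ) * (1/((m:ℝ)^2-1)) = 1/((m:ℝ)+1) := by
      rw [Nat.cast_sub (by omega : 1 ≤ m)]
      push_cast
      field_simp [hmsq.ne', hm1'.ne']
      ring
    have h13 : (Real.exp (1/(2*((m:ℝ)+1))))^2 = Real.exp (1/((m:ℝ)+1)) := by
      rw [← Real.exp_nat_mul]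
      congr 1
      push_cast
      field_simp
    rw [h6, h13]
    calc ((m:ℝ)^2/((m:ℝ)^2-1))^(m-1) ≤ (Real.exp (1/((m:ℝ)^2-1)))^(m-1) := h10
      _ = Real.exp (((m-1:ℕ):ℝ) * (1/((m:ℝ)^2-1))) := h11
      _ = Real.exp (1/((m:ℝ)+1)) := by rw [h12]
  have hβexp : (m:ℝ)/((m:ℝ)+1) ≤ Real.exp (-(1/((m:ℝ)+1))) := by
    have h8 := Real.add_one_le_exp (-(1/((m:ℝ)+1)))
    have h9 : (m:ℝ)/((m:ℝ)+1) = -(1/((m:ℝ)+1)) + 1 := by field_simp; ring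
    linarith
  have hnum : ((m:ℝ)/((m:ℝ)+1)) * κ ^ (m-1) ≤ Real.exp (-1 / (2*((m:ℝ)+1))) := by
    calc ((m:ℝ)/((m:ℝ)+1)) * κ ^ (m-1)
        ≤ Real.exp (-(1/((m:ℝ)+1))) * Real.exp (1/(2*((m:ℝ)+1))) :=
          mul_le_mul hβexp hκpow (pow_nonneg hκpos.le _) (Real.exp_pos _).le
      _ = Real.exp (-(1/((m:ℝ)+1)) + 1/(2*((m:ℝ)+1))) := (Real.exp_add _ _).symm
      _ = Real.exp (-1 / (2*((m:ℝ)+1))) := by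
          congr 1
          field_simp
          ring
  calc psi A u dt lt ≤ (((m:ℝ)/((m:ℝ)+1)) * κ ^ (m-1)) * psi A u d l := by
        rw [← hprodc]; exact hprod
    _ ≤ Real.exp (-1 / (2*((m:ℝ)+1))) * psi A u d l :=
        mul_le_mul_of_nonneg_right hnum hψ0
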